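/- Let n ≥ 1, let A ∈ Matrix (Fin n) (Fin n) ℝ be skew-symmetric (Aᵀ = -A), and let m pairs (i_1,j_1),…,(i_m,j_m) in Fin n with i_k ≠ j_k be given. Let G_contr be the simple graph on Fin n with edge set {{i_1,j_1},…,{i_m,j_m}} and let G_drift be the simple graph on Fin n with an edge {i,j} (i ≠ j) exactly when A i j ≠ 0. Suppose that every connected component of G_contr contains at least three vertices, i.e., for every v : Fin n the set of vertices reachable from v in G_contr has at least three elements. Then the Lie subalgebra of Matrix (Fin n) (Fin n) ℝ generated by {A} ∪ {B i_1 j_1, …, B i_m j_m} equals so(n) if and only if the union graph G_drift ⊔ G_contr (the simple graph whose edge set is the union of the two edge sets) is connected. (This is the Lie algebra rank condition characterizing controllability of the bilinear system dX/dt = A X + (∑_k u_k(t) B i_k j_k) X on SO(n).) -/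

import Mathlib

open Matrix

attribute [local instance 100] LieRing.ofAssociativeRing

/-- The standard basis matrix `E i j`. -/
noncomputable def E {n : ℕ} (i j : Fin n) : Matrix (Fin n) (Fin n) ℝ :=
  Matrix.single i j 1

/-- `B i j = E i j - E j i`, a basis element of `so(n)`. -/
noncomputable def B {n : ℕ} (i j : Fin n) : Matrix (Fin n) (Fin n) ℝ :=
  E i j - E j i

/-- The special orthogonal Lie algebra `so(n)` of skew-symmetric matrices. -/
def so (n : ℕ) : LieSubalgebra ℝ (Matrix (Fin n) (Fin n) ℝ) where
  carrier := {X | Xᵀ = -X}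
  add_mem' := by
    intro X Y hX hY
    simp only [Set.mem_setOf_eq] at *
    rw [Matrix.transpose_add, hX, hY, neg_add]
  zero_mem' := by simp
  smul_mem' := by
    intro c X hX
    simp only [Set.mem_setOf_eq] at *
    rw [Matrix.transpose_smul, hX, smul_neg]
  lie_mem' := by
    intro X Y hX hY
    simp only [Set.mem_setOf_eq] at *
    rw [Ring.lie_def, Matrix.transpose_sub, Matrix.transpose_mul, Matrix.transpose_mul, hX, hY]
    simp [neg_mul_neg, neg_sub]

namespace SOnAux

variable {n : ℕ}

lemma B_apply (p q x y : Fin n) :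
    B p q x y = (if x = p ∧ y = q then (1:ℝ) else 0) - (if x = q ∧ y = p then 1 else 0) := by
  simp [B, E, Matrix.single, Matrix.sub_apply, eq_comm, and_comm]

lemma lieB_apply (p q x y : Fin n) (M : Matrix (Fin n) (Fin n) ℝ) :
    ⁅B p q, M⁆ x y = (if x = p then M q y else 0) - (if x = q then M p y else 0)
      - (if y = q then M x p else 0) + (if y = p then M x q else 0) := by
  rw [Ring.lie_def]
  simp only [B, E, Matrix.sub_apply, Matrix.sub_mul, Matrix.mul_sub, Matrix.mul_apply,
    Matrix.single, of_apply, ite_and, ite_mul, mul_ite, one_mul, mul_one,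
    zero_mul, mul_zero, Finset.sum_ite_eq, Finset.sum_ite_eq', Finset.mem_univ, if_true]
  simp [eq_comm]
  ring

lemma B_swap (p q : Fin n) : B q p = -B p q := by
  simp only [B]; abel

lemma B_skew (p q : Fin n) : (B p q)ᵀ = -B p q := by
  ext x y; simp [transpose_apply, B_apply, and_comm]

lemma lie_BB (p q r : Fin n) (hpq : p ≠ q) (hqr : q ≠ r) (hpr : p ≠ r) :
    ⁅B p q, B q r⁆ = B p r := by
  simp only [B, E, Ring.lie_def, Matrix.sub_mul, Matrix.mul_sub]
  rw [Matrix.single_mul_single_same, Matrix.single_mul_single_same,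
    Matrix.single_mul_single_of_ne (h := hqr.symm),
    Matrix.single_mul_single_of_ne (h := hpq),
    Matrix.single_mul_single_of_ne (h := hpr),
    Matrix.single_mul_single_of_ne (h := hpr.symm),
    Matrix.single_mul_single_of_ne (h := hqr),
    Matrix.single_mul_single_of_ne (h := hpq.symm)]
  simp only [mul_one]
  abel

lemma ad2_apply (p q : Fin n) (hpq : p ≠ q) (X : Matrix (Fin n) (Fin n) ℝ)
    (hX : Xᵀ = -X) (x y : Fin n) :
    ⁅B p q, ⁅B p q, X⁆⁆ x y =
      if x = p ∨ x = q then (if y = p ∨ y = q then 0 else -X x y)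
      else (if y = p ∨ y = q then -X x y else 0) := by
  have hs : ∀ a b : Fin n, X b a = -X a b := fun a b => by
    have := congrFun (congrFun hX a) b; simpa [transpose_apply] using this
  have hd : ∀ a, X a a = 0 := fun a => by have := hs a a; linarith
  simp only [lieB_apply]
  by_cases hxp : x = p <;> by_cases hxq : x = q <;> by_cases hyp : y = p <;>
    by_cases hyq : y = q <;>
    simp [hxp, hxq, hyp, hyq, hpq, hpq.symm, hd] <;>
    linarith [hs p q, hs x y, hs p y, hs q y, hs y p, hs y q, hs x p, hs x q]

lemma skewLie (X Y : Matrix (Fin n) (Fin n) ℝ) (hX : Xᵀ = -X) (hY : Yᵀ = -Y) :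
    ⁅X, Y⁆ᵀ = -⁅X, Y⁆ := by
  rw [Ring.lie_def, Matrix.transpose_sub, Matrix.transpose_mul, Matrix.transpose_mul, hX, hY]
  simp [neg_mul_neg, neg_sub]

set_option maxHeartbeats 2000000 in
lemma extract (u a b v c d : Fin n)
    (h1 : u ≠ a) (h2 : u ≠ b) (h3 : u ≠ v) (h4 : u ≠ c) (h5 : u ≠ d)
    (h6 : a ≠ b) (h7 : a ≠ v) (h8 : a ≠ c) (h9 : a ≠ d)
    (h10 : b ≠ v) (h11 : b ≠ c) (h12 : b ≠ d)
    (h13 : v ≠ c) (h14 : v ≠ d) (h15 : c ≠ d)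
    (A : Matrix (Fin n) (Fin n) ℝ) (hA : Aᵀ = -A) :
    (⁅B v c, ⁅B v c, ⁅B u a, ⁅B u a, A⁆⁆⁆⁆
        + ⁅B a b, ⁅B a b, ⁅B v c, ⁅B v c, ⁅B u a, ⁅B u a, A⁆⁆⁆⁆⁆⁆)
      + ⁅B c d, ⁅B c d,
          ⁅B v c, ⁅B v c, ⁅B u a, ⁅B u a, A⁆⁆⁆⁆
            + ⁅B a b, ⁅B a b, ⁅B v c, ⁅B v c, ⁅B u a, ⁅B u a, A⁆⁆⁆⁆⁆⁆⁆⁆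
      = A u v • B u v := by
  have hZ1s : (⁅B u a, ⁅B u a, A⁆⁆)ᵀ = -⁅B u a, ⁅B u a, A⁆⁆ :=
    skewLie _ _ (B_skew u a) (skewLie _ _ (B_skew u a) hA)
  have hZs : (⁅B v c, ⁅B v c, ⁅B u a, ⁅B u a, A⁆⁆⁆⁆)ᵀ = _ :=
    skewLie _ _ (B_skew v c) (skewLie _ _ (B_skew v c) hZ1s)
  have hWs : (⁅B v c, ⁅B v c, ⁅B u a, ⁅B u a, A⁆⁆⁆⁆
      + ⁅B a b, ⁅B a b, ⁅B v c, ⁅B v c, ⁅B u a, ⁅B u a, A⁆⁆⁆⁆⁆⁆)ᵀ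
      = -(⁅B v c, ⁅B v c, ⁅B u a, ⁅B u a, A⁆⁆⁆⁆
      + ⁅B a b, ⁅B a b, ⁅B v c, ⁅B v c, ⁅B u a, ⁅B u a, A⁆⁆⁆⁆⁆⁆) := by
    rw [Matrix.transpose_add, hZs,
      skewLie _ _ (B_skew a b) (skewLie _ _ (B_skew a b) hZs), neg_add]
  have hvu : A v u = -A u v := by
    have := congrFun (congrFun hA u) v; simpa [transpose_apply] using this
  ext x y
  have e4 := ad2_apply c d h15 _ hWs x y
  have e3 := ad2_apply a b h6 _ hZs x y
  have e2 := ad2_apply v c h13 _ hZ1s x y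
  have e1 := ad2_apply u a h1 A hA x y
  rw [Matrix.add_apply, Matrix.add_apply, e4, Matrix.smul_apply, B_apply, smul_eq_mul]
  rw [Matrix.add_apply] at e4 ⊢
  rw [e3, e2, e1]
  clear e1 e2 e3 e4 hZ1s hZs hWs hA
  have hx : x = u ∨ x = a ∨ x = b ∨ x = v ∨ x = c ∨ x = d ∨
      (x ≠ u ∧ x ≠ a ∧ x ≠ b ∧ x ≠ v ∧ x ≠ c ∧ x ≠ d) := by tauto
  have hy : y = u ∨ y = a ∨ y = b ∨ y = v ∨ y = c ∨ y = d ∨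
      (y ≠ u ∧ y ≠ a ∧ y ≠ b ∧ y ≠ v ∧ y ≠ c ∧ y ≠ d) := by tauto
  rcases hx with rfl | rfl | rfl | rfl | rfl | rfl | ⟨hx1, hx2, hx3, hx4, hx5, hx6⟩ <;>
    rcases hy with rfl | rfl | rfl | rfl | rfl | rfl | ⟨hy1, hy2, hy3, hy4, hy5, hy6⟩ <;>
    simp_all <;> (try linarith) <;> (try split_ifs) <;> simp_all [eq_comm]

lemma sum_B (X : Matrix (Fin n) (Fin n) ℝ) :
    ∑ i : Fin n, ∑ j : Fin n, X i j • B i j = X - Xᵀ := by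
  ext x y
  simp [Matrix.sum_apply, B_apply, mul_sub, mul_ite, ite_and, Finset.sum_sub_distrib,
    Finset.sum_ite_eq, Finset.sum_ite_eq', eq_comm]

end SOnAux

open SOnAux in
set_option maxHeartbeats 1000000 in
/-- Lie algebra rank condition for the bilinear system with drift on `SO(n)`:
if every connected component of the controlled interaction graph has at least three
vertices, then the generated Lie algebra equals `so(n)` iff the union of the drift and
controlled interaction graphs is connected. -/
theorem SOn_controllability_iff_union_connected
    (n m : ℕ) (hn : 1 ≤ n) (A : Matrix (Fin n) (Fin n) ℝ) (hA : Aᵀ = -A)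
    (ij : Fin m → Fin n × Fin n) (hij : ∀ k, (ij k).1 ≠ (ij k).2)
    (Gcontr Gdrift : SimpleGraph (Fin n))
    (hGc : Gcontr = SimpleGraph.fromRel fun a b => ∃ k, ij k = (a, b))
    (hGd : Gdrift = SimpleGraph.fromRel fun a b => A a b ≠ 0)
    (hcomp : ∀ v : Fin n, 3 ≤ {u : Fin n | Gcontr.Reachable v u}.ncard) :
    LieSubalgebra.lieSpan ℝ (Matrix (Fin n) (Fin n) ℝ)
        ({A} ∪ Set.range fun k => B (ij k).1 (ij k).2) = so n ↔
      (Gdrift ⊔ Gcontr).Connected := by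
  set g := LieSubalgebra.lieSpan ℝ (Matrix (Fin n) (Fin n) ℝ)
      ({A} ∪ Set.range fun k => B (ij k).1 (ij k).2) with hg
  have hAs : ∀ x y, A y x = -A x y := fun x y => by
    have := congrFun (congrFun hA x) y; simpa [transpose_apply] using this
  constructor
  · -- forward: span = so n → union connected
    intro hspan
    have hne : Nonempty (Fin n) := ⟨⟨0, hn⟩⟩
    -- the subalgebra of matrices supported within components of the union graph
    set R := (Gdrift ⊔ Gcontr).Reachable with hR
    let K : LieSubalgebra ℝ (Matrix (Fin n) (Fin n) ℝ) :=
      { carrier := {X | ∀ x y : Fin n, ¬ R x y → X x y = 0}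
        add_mem' := by
          intro X Y hX hY x y h
          simp only [Matrix.add_apply, hX x y h, hY x y h, add_zero]
        zero_mem' := by intro x y h; rfl
        smul_mem' := by
          intro c X hX x y h
          simp only [Matrix.smul_apply, hX x y h, smul_zero]
        lie_mem' := by
          intro X Y hX hY x y h
          rw [Ring.lie_def]
          simp only [Matrix.sub_apply, Matrix.mul_apply]
          rw [Finset.sum_eq_zero, Finset.sum_eq_zero, sub_zero]
          · intro z _
            by_cases hxz : R x z
            · have hzy : ¬ R z y := fun hzy => h (hxz.trans hzy)
              rw [hX z y hzy, mul_zero]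
            · rw [hY x z hxz, zero_mul]
          · intro z _
            by_cases hxz : R x z
            · have hzy : ¬ R z y := fun hzy => h (hxz.trans hzy)
              rw [hY z y hzy, mul_zero]
            · rw [hX x z hxz, zero_mul] }
    have hsub : g ≤ K := by
      rw [hg, LieSubalgebra.lieSpan_le]
      rintro X (rfl | ⟨k, rfl⟩)
      · intro x y h
        by_contra hAxy
        have hxy : x ≠ y := fun hxy => h (hxy ▸ SimpleGraph.Reachable.refl x)
        apply h
        apply SimpleGraph.Adj.reachable
        rw [SimpleGraph.sup_adj]
        left
        rw [hGd, SimpleGraph.fromRel_adj]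
        exact ⟨hxy, Or.inl hAxy⟩
      · intro x y h
        by_contra hBxy
        apply h
        apply SimpleGraph.Adj.reachable
        rw [SimpleGraph.sup_adj]
        right
        rw [hGc, SimpleGraph.fromRel_adj]
        simp only at hBxy
        rw [B_apply] at hBxy
        rcases Decidable.em (x = (ij k).1 ∧ y = (ij k).2) with ⟨rfl, rfl⟩ | h1
        · exact ⟨hij k, Or.inl ⟨k, rfl⟩⟩
        rcases Decidable.em (x = (ij k).2 ∧ y = (ij k).1) with ⟨rfl, rfl⟩ | h2
        · exact ⟨(hij k).symm, Or.inr ⟨k, rfl⟩⟩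
        · simp [h1, h2] at hBxy
    rw [SimpleGraph.connected_iff]
    refine ⟨fun x y => ?_, hne⟩
    by_contra hRxy
    have hxy : x ≠ y := fun hxy => hRxy (hxy ▸ SimpleGraph.Reachable.refl x)
    have hBmem : B x y ∈ g := by
      rw [hspan]; exact B_skew x y
    have := hsub hBmem x y hRxy
    rw [B_apply] at this
    simp [hxy] at this
  · -- backward: union connected → span = so n
    intro hconn
    -- pairs connected in Gcontr
    have contrW : ∀ p q : Fin n, Gcontr.Walk p q → p = q ∨ B p q ∈ g := by
      intro p q w
      induction w with
      | nil => exact Or.inl rfl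
      | @cons p z q h w ih =>
        rw [hGc, SimpleGraph.fromRel_adj] at h
        obtain ⟨hpz, hk⟩ := h
        have hBpz : B p z ∈ g := by
          rcases hk with ⟨k, hk⟩ | ⟨k, hk⟩
          · have : B (ij k).1 (ij k).2 = B p z := by rw [hk]
            rw [← this]
            exact LieSubalgebra.subset_lieSpan (Or.inr ⟨k, rfl⟩)
          · have : B (ij k).1 (ij k).2 = B z p := by rw [hk]
            rw [B_swap z p, ← this]
            exact neg_mem (LieSubalgebra.subset_lieSpan (Or.inr ⟨k, rfl⟩))
        rcases ih with rfl | hBzq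
        · exact Or.inr hBpz
        by_cases hpq : p = q
        · exact Or.inl hpq
        by_cases hzq : z = q
        · subst hzq; exact Or.inr hBpz
        · right
          rw [← lie_BB p z q hpz hzq hpq]
          exact g.lie_mem hBpz hBzq
    have contrR : ∀ p q : Fin n, Gcontr.Reachable p q → p = q ∨ B p q ∈ g := by
      intro p q h
      obtain ⟨w⟩ := h
      exact contrW p q w
    -- each vertex has two distinct companions in its Gcontr component
    have hcompex : ∀ p : Fin n, ∃ a b : Fin n, Gcontr.Reachable p a ∧ Gcontr.Reachable p b ∧
        a ≠ p ∧ b ≠ p ∧ a ≠ b := by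
      intro p
      have h3 := hcomp p
      have hfin : {u : Fin n | Gcontr.Reachable p u}.Finite := Set.toFinite _
      rw [Set.ncard_eq_toFinset_card _ hfin] at h3
      have hp : p ∈ hfin.toFinset := by
        rw [Set.Finite.mem_toFinset]; exact SimpleGraph.Reachable.refl p
      have h2 : 1 < (hfin.toFinset.erase p).card := by
        rw [Finset.card_erase_of_mem hp]; omega
      obtain ⟨a, ha, b, hb, hab⟩ := Finset.one_lt_card.mp h2
      rw [Finset.mem_erase, Set.Finite.mem_toFinset] at ha hb
      exact ⟨a, b, ha.2, hb.2, ha.1, hb.1, hab⟩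
    -- drift edges give B p q ∈ g
    have hAg : A ∈ g := LieSubalgebra.subset_lieSpan (Or.inl rfl)
    have driftR : ∀ p q : Fin n, p ≠ q → A p q ≠ 0 → B p q ∈ g := by
      intro p q hpq hApq
      by_cases hr : Gcontr.Reachable p q
      · rcases contrR p q hr with rfl | h
        · exact absurd rfl hpq
        · exact h
      · obtain ⟨a, b, hra, hrb, hap, hbp, hab⟩ := hcompex p
        obtain ⟨c, d, hrc, hrd, hcq, hdq, hcd⟩ := hcompex q
        -- distinctness across components
        have hax : ∀ x : Fin n, Gcontr.Reachable p x → ∀ y : Fin n, Gcontr.Reachable q y →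
            x ≠ y := by
          intro x hx y hy hxy
          exact hr (hx.trans (hxy ▸ hy.symm))
        have hpc : p ≠ c := hax p (SimpleGraph.Reachable.refl p) c hrc
        have hpd : p ≠ d := hax p (SimpleGraph.Reachable.refl p) d hrd
        have haq : a ≠ q := fun h => hax a hra q (SimpleGraph.Reachable.refl q) h
        have hac : a ≠ c := hax a hra c hrc
        have had : a ≠ d := hax a hra d hrd
        have hbq : b ≠ q := fun h => hax b hrb q (SimpleGraph.Reachable.refl q) h
        have hbc : b ≠ c := hax b hrb c hrc
        have hbd : b ≠ d := hax b hrb d hrd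
        -- memberships
        have hBpa : B p a ∈ g := by
          rcases contrR p a hra with rfl | h
          · exact absurd rfl hap
          · exact h
        have hBab : B a b ∈ g := by
          rcases contrR a b (hra.symm.trans hrb) with rfl | h
          · exact absurd rfl hab
          · exact h
        have hBqc : B q c ∈ g := by
          rcases contrR q c hrc with rfl | h
          · exact absurd rfl hcq
          · exact h
        have hBcd : B c d ∈ g := by
          rcases contrR c d (hrc.symm.trans hrd) with rfl | h
          · exact absurd rfl hcd
          · exact h
        have hid := extract p a b q c d (Ne.symm hap) (Ne.symm hbp) hpq hpc hpd hab
          haq hac had hbq hbc hbd (Ne.symm hcq) (Ne.symm hdq) hcd A hA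
        have hmem : (⁅B q c, ⁅B q c, ⁅B p a, ⁅B p a, A⁆⁆⁆⁆
            + ⁅B a b, ⁅B a b, ⁅B q c, ⁅B q c, ⁅B p a, ⁅B p a, A⁆⁆⁆⁆⁆⁆)
            + ⁅B c d, ⁅B c d,
                ⁅B q c, ⁅B q c, ⁅B p a, ⁅B p a, A⁆⁆⁆⁆
                  + ⁅B a b, ⁅B a b, ⁅B q c, ⁅B q c, ⁅B p a, ⁅B p a, A⁆⁆⁆⁆⁆⁆⁆⁆ ∈ g := by
          have hZ1 : ⁅B p a, ⁅B p a, A⁆⁆ ∈ g := g.lie_mem hBpa (g.lie_mem hBpa hAg)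
          have hZ : ⁅B q c, ⁅B q c, ⁅B p a, ⁅B p a, A⁆⁆⁆⁆ ∈ g :=
            g.lie_mem hBqc (g.lie_mem hBqc hZ1)
          have hW : ⁅B q c, ⁅B q c, ⁅B p a, ⁅B p a, A⁆⁆⁆⁆
              + ⁅B a b, ⁅B a b, ⁅B q c, ⁅B q c, ⁅B p a, ⁅B p a, A⁆⁆⁆⁆⁆⁆ ∈ g :=
            add_mem hZ (g.lie_mem hBab (g.lie_mem hBab hZ))
          exact add_mem hW (g.lie_mem hBcd (g.lie_mem hBcd hW))
        rw [hid] at hmem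
        have := g.smul_mem (A p q)⁻¹ hmem
        rwa [inv_smul_smul₀ hApq] at this
    -- all pairs, via walks in the union graph
    have allW : ∀ p q : Fin n, (Gdrift ⊔ Gcontr).Walk p q → p = q ∨ B p q ∈ g := by
      intro p q w
      induction w with
      | nil => exact Or.inl rfl
      | @cons p z q h w ih =>
        have hBpz : p ≠ z → B p z ∈ g := by
          intro hpz
          rw [SimpleGraph.sup_adj] at h
          rcases h with h | h
          · rw [hGd, SimpleGraph.fromRel_adj] at h
            rcases h.2 with h' | h'
            · exact driftR p z hpz h'
            · refine driftR p z hpz ?_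
              rw [← neg_neg (A p z), ← hAs p z]
              simpa using h'
          · rcases contrR p z h.reachable with rfl | h'
            · exact absurd rfl hpz
            · exact h'
        have hpz : p ≠ z := by
          intro hpz; subst hpz; exact (Gdrift ⊔ Gcontr).loopless.irrefl p h
        rcases ih with rfl | hBzq
        · exact Or.inr (hBpz hpz)
        by_cases hpq : p = q
        · exact Or.inl hpq
        by_cases hzq : z = q
        · subst hzq; exact Or.inr (hBpz hpz)
        · right
          rw [← lie_BB p z q hpz hzq hpq]
          exact g.lie_mem (hBpz hpz) hBzq
    have allR : ∀ p q : Fin n, p = q ∨ B p q ∈ g := by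
      intro p q
      obtain ⟨w⟩ := hconn.preconnected p q
      exact allW p q w
    -- conclude equality
    apply le_antisymm
    · rw [hg, LieSubalgebra.lieSpan_le]
      rintro X (rfl | ⟨k, rfl⟩)
      · exact hA
      · exact B_skew _ _
    · intro X hX
      have hXs : Xᵀ = -X := hX
      have hX2 : X = (2:ℝ)⁻¹ • ∑ i : Fin n, ∑ j : Fin n, X i j • B i j := by
        rw [sum_B, hXs]
        ext x y
        simp only [Matrix.smul_apply, Matrix.sub_apply, Matrix.neg_apply, smul_eq_mul]
        ring
      rw [hX2]
      apply g.smul_mem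
      apply sum_mem
      intro i _
      apply sum_mem
      intro j _
      rcases allR i j with rfl | h
      · have : B i i = 0 := by simp [B]
        rw [this, smul_zero]; exact g.zero_mem
      · exact g.smul_mem _ h
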